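/- Averaged duality gap bound: suppose G is convex on ℝⁿ and, for constants c ∈ (0,1], B ≥ 0 and a fixed s ∈ (0,1], the iterates satisfy c·s·G(α⁽ᵗ⁾) ≤ D(α⁽ᵗ⁺¹⁾) − D(α⁽ᵗ⁾) + c·(s²/2)·B for all t, where D is bounded above by D*. Then the average ᾱ = (1/(T−T₀)) Σ_{t=T₀}^{T−1} α⁽ᵗ⁾ satisfies G(ᾱ) ≤ (1/(c·s))·(D* − D(α^{(T₀)}))/(T−T₀) + (s/2)·B. -/

import Mathlib

open Finset

/-- Averaged duality-gap bound: telescoping the per-iteration inequality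
`c·s·G(α⁽ᵗ⁾) ≤ D(α⁽ᵗ⁺¹⁾) − D(α⁽ᵗ⁾) + c·(s²/2)·B` and applying Jensen's inequality to
the convex gap `G` yields
`G(ᾱ) ≤ (1/(cs))·(D* − D(α^{(T₀)}))/(T−T₀) + (s/2)·B` for the average
`ᾱ = (1/(T−T₀)) Σ_{t=T₀}^{T−1} α⁽ᵗ⁾`. -/
theorem averaged_duality_gap_bound
    (N : ℕ) (G D : (Fin N → ℝ) → ℝ) (hG : ConvexOn ℝ Set.univ G)
    (Dstar : ℝ) (hD : ∀ β : Fin N → ℝ, D β ≤ Dstar)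
    (η Θ B s : ℝ) (hη : η ∈ Set.Ioc (0 : ℝ) 1) (hΘ : Θ ∈ Set.Ico (0 : ℝ) 1)
    (hB : 0 ≤ B) (hs : s ∈ Set.Ioc (0 : ℝ) 1)
    (c : ℝ) (hc : c = η * (1 - Θ)) (hcmem : c ∈ Set.Ioc (0 : ℝ) 1)
    (α : ℕ → Fin N → ℝ)
    (hstep : ∀ t : ℕ, c * s * G (α t) ≤ D (α (t + 1)) - D (α t) + c * (s ^ 2 / 2) * B)
    (T₀ T : ℕ) (hT : T₀ < T) :
    G ((((T : ℝ) - (T₀ : ℝ))⁻¹) • ∑ t ∈ Finset.Ico T₀ T, α t) ≤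
      (1 / (c * s)) * ((Dstar - D (α T₀)) / ((T : ℝ) - (T₀ : ℝ))) + (s / 2) * B := by
  obtain ⟨hc0, hc1⟩ := hcmem
  obtain ⟨hs0, hs1⟩ := hs
  have hn0 : (0 : ℝ) < (T : ℝ) - (T₀ : ℝ) := by
    have : (T₀ : ℝ) < (T : ℝ) := by exact_mod_cast hT
    linarith
  set n : ℝ := (T : ℝ) - (T₀ : ℝ) with hn
  have hcard : ((Finset.Ico T₀ T).card : ℝ) = n := by
    rw [Nat.card_Ico]
    push_cast [Nat.cast_sub hT.le]
    linarith [hn]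
  -- Jensen
  have hJ : G (n⁻¹ • ∑ t ∈ Finset.Ico T₀ T, α t) ≤
      ∑ t ∈ Finset.Ico T₀ T, n⁻¹ * G (α t) := by
    rw [Finset.smul_sum]
    exact hG.map_sum_le (fun i _ => by positivity)
      (by rw [Finset.sum_const, nsmul_eq_mul, hcard, mul_inv_cancel₀ hn0.ne'])
      (fun i _ => Set.mem_univ _)
  -- telescoping sum bound
  have htel : ∑ t ∈ Finset.Ico T₀ T, (D (α (t + 1)) - D (α t)) = D (α T) - D (α T₀) := by
    rw [Finset.sum_Ico_eq_sub _ hT.le, Finset.sum_range_sub (fun i => D (α i)),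
      Finset.sum_range_sub (fun i => D (α i))]
    ring
  have hsum : c * s * ∑ t ∈ Finset.Ico T₀ T, G (α t) ≤
      Dstar - D (α T₀) + n * (c * (s ^ 2 / 2) * B) := by
    have h1 : ∑ t ∈ Finset.Ico T₀ T, (c * s * G (α t)) ≤
        ∑ t ∈ Finset.Ico T₀ T, (D (α (t + 1)) - D (α t) + c * (s ^ 2 / 2) * B) :=
      Finset.sum_le_sum fun t _ => hstep t
    rw [Finset.sum_add_distrib, htel, Finset.sum_const, nsmul_eq_mul, hcard] at h1
    rw [Finset.mul_sum]
    have := hD (α T)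
    linarith
  -- combine
  have hGsum : ∑ t ∈ Finset.Ico T₀ T, n⁻¹ * G (α t) ≤
      (1 / (c * s)) * ((Dstar - D (α T₀)) / n) + (s / 2) * B := by
    rw [← Finset.mul_sum]
    have hcs : 0 < c * s := mul_pos hc0 hs0
    have h2 : ∑ t ∈ Finset.Ico T₀ T, G (α t) ≤
        (Dstar - D (α T₀) + n * (c * (s ^ 2 / 2) * B)) / (c * s) :=
      (le_div_iff₀' hcs).mpr hsum
    calc n⁻¹ * ∑ t ∈ Finset.Ico T₀ T, G (α t)
        ≤ n⁻¹ * ((Dstar - D (α T₀) + n * (c * (s ^ 2 / 2) * B)) / (c * s)) := by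
          apply mul_le_mul_of_nonneg_left h2 (by positivity)
      _ = (1 / (c * s)) * ((Dstar - D (α T₀)) / n) + (s / 2) * B := by
          field_simp
  exact hJ.trans hGsum
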